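/- Let (φ_n) be a sequence of functions from a set S to ℝ that is uniformly Cauchy with a fixed convergence rate: |φ_n(s) − φ_m(s)| ≤ 2^{-min(n,m)} for all n, m and s ∈ S. Then there exists a continuous function θ : ℝ^ℕ → ℝ, depending only on the rate (not on the φ_n or S), such that θ(φ_0(s), φ_1(s), …) = lim_n φ_n(s) for every s ∈ S. -/

import Mathlib

open Filter Topology

noncomputable def clampFL (n : ℕ) (t : ℝ) : ℝ :=
  max (-((2:ℝ) ^ (-(n:ℤ)))) (min t ((2:ℝ) ^ (-(n:ℤ))))

lemma clampFL_abs_le (n : ℕ) (t : ℝ) : |clampFL n t| ≤ (2:ℝ) ^ (-(n:ℤ)) := by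
  have hc : (0:ℝ) < (2:ℝ) ^ (-(n:ℤ)) := by positivity
  rw [abs_le]
  constructor
  · exact le_max_left _ _
  · exact max_le (by linarith) (min_le_right _ _)

lemma clampFL_eq (n : ℕ) (t : ℝ) (h : |t| ≤ (2:ℝ) ^ (-(n:ℤ))) : clampFL n t = t := by
  rw [abs_le] at h
  unfold clampFL
  rw [min_eq_left h.2, max_eq_right h.1]

lemma summable_two_zpow : Summable (fun n : ℕ => (2:ℝ) ^ (-(n:ℤ))) := by
  have : (fun n : ℕ => (2:ℝ) ^ (-(n:ℤ))) = fun n : ℕ => ((2:ℝ)⁻¹) ^ n := by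
    funext n
    rw [zpow_neg, zpow_natCast, inv_pow]
  rw [this]
  exact summable_geometric_of_lt_one (by norm_num) (by norm_num)

/-- Forced limits: there is a single continuous `θ : ℝ^ℕ → ℝ`, depending only on the
convergence rate `2^{-min(n,m)}`, that computes the limit of any uniformly Cauchy
sequence of real-valued functions with that rate. -/
theorem forced_limit :
    ∃ θ : (ℕ → ℝ) → ℝ, Continuous θ ∧
      ∀ (S : Type) (φ : ℕ → S → ℝ),
        (∀ n m : ℕ, ∀ s : S, |φ n s - φ m s| ≤ (2:ℝ) ^ (-(min n m : ℤ))) →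
        ∀ s : S, Tendsto (fun n => φ n s) atTop (𝓝 (θ (fun n => φ n s))) := by
  refine ⟨fun x => x 0 + ∑' n, clampFL n (x (n+1) - x n), ?_, ?_⟩
  · apply Continuous.add (continuous_apply 0)
    apply continuous_tsum (u := fun n : ℕ => (2:ℝ) ^ (-(n:ℤ)))
    · intro n
      unfold clampFL
      exact continuous_const.max (((continuous_apply (n+1)).sub
        (continuous_apply n)).min continuous_const)
    · exact summable_two_zpow
    · intro n x
      simpa using clampFL_abs_le n (x (n+1) - x n)
  · intro S φ hφ s
    set x : ℕ → ℝ := fun n => φ n s with hx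
    have hd : ∀ n, |x (n+1) - x n| ≤ (2:ℝ) ^ (-(n:ℤ)) := by
      intro n
      have := hφ (n+1) n s
      simpa [min_eq_right (Nat.le_succ n)] using this
    have hce : ∀ n, clampFL n (x (n+1) - x n) = x (n+1) - x n := fun n =>
      clampFL_eq n _ (hd n)
    have hsum : Summable (fun n => clampFL n (x (n+1) - x n)) :=
      Summable.of_norm_bounded summable_two_zpow (fun n => by
        simpa using clampFL_abs_le n _)
    have htend := hsum.hasSum.tendsto_sum_nat
    have hps : ∀ N, ∑ k ∈ Finset.range N, clampFL k (x (k+1) - x k) = x N - x 0 := by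
      intro N
      rw [Finset.sum_congr rfl (fun k _ => hce k)]
      exact Finset.sum_range_sub x N
    have : Tendsto (fun N => x N - x 0) atTop
        (𝓝 (∑' n, clampFL n (x (n+1) - x n))) := by
      simpa [hps] using htend
    have := this.const_add (x 0)
    simpa using this
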